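/- Let X be a normal Hausdorff space, Y a Banach space contained in C_b(X) with ‖·‖ ≥ ‖·‖_∞ and (X,Y) satisfying property (H). Let f : X → ℝ ∪ {+∞} be bounded from below, lower semicontinuous, with nonempty domain. Define F(f)(Q) := sup_{φ∈Y}(Q(φ) − f^×(φ)) for Q ∈ Y*. Then F(f) is convex and weak*-lower semicontinuous on Y*, its effective domain is contained in the weak*-closed convex hull of Δ_Y(X), and F(f)(δ_x) = f(x) for every x ∈ X. -/

import Mathlib

open BoundedContinuousFunction

/-- Every continuous linear functional on the weak-* dual is an evaluation. -/
lemma weakDual_exists_rep {Y : Type*} [NormedAddCommGroup Y] [NormedSpace ℝ Y]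
    (G : WeakDual ℝ Y →L[ℝ] ℝ) : ∃ φ : Y, ∀ Q : WeakDual ℝ Y, G Q = Q φ := by
  have : Nonempty Y := ⟨0⟩
  have hsn : WithSeminorms
      (LinearMap.toSeminormFamily (topDualPairing ℝ Y) :
        Y → Seminorm ℝ (WeakDual ℝ Y)) :=
    (topDualPairing ℝ Y).weakBilin_withSeminorms
  set q : Seminorm ℝ (WeakDual ℝ Y) :=
    (G : WeakDual ℝ Y →ₗ[ℝ] ℝ).toSeminorm with hqdef
  have hqc : Continuous q := by
    have : (q : WeakDual ℝ Y → ℝ) = fun Q => ‖G Q‖ := rfl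
    rw [this]
    exact G.continuous.norm
  obtain ⟨s, C, hC0, hCb⟩ := Seminorm.bound_of_continuous hsn q hqc
  -- evaluation functionals
  let L : Y → (WeakDual ℝ Y →ₗ[ℝ] ℝ) := fun φ =>
    { toFun := fun Q => Q φ
      map_add' := fun Q R => rfl
      map_smul' := fun c Q => rfl }
  have hker : (⨅ i : s, LinearMap.ker (L (i : Y))) ≤
      LinearMap.ker (G : WeakDual ℝ Y →ₗ[ℝ] ℝ) := by
    intro Q hQ
    simp only [Submodule.mem_iInf, LinearMap.mem_ker] at hQ ⊢
    refine norm_le_zero_iff.mp (le_trans (hCb Q) ?_)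
    beta_reduce
    rw [Seminorm.smul_apply, NNReal.smul_def]
    refine le_trans (mul_le_mul_of_nonneg_left
      (Seminorm.finset_sup_apply_le le_rfl fun i hi => ?_) C.coe_nonneg) (by simp)
    exact norm_le_zero_iff.mpr (hQ ⟨i, hi⟩)
  have hmem := mem_span_of_iInf_ker_le_ker (𝕜 := ℝ) (L := fun i : s => L (i : Y)) hker
  rw [Submodule.mem_span_range_iff_exists_fun] at hmem
  obtain ⟨coef, hcoef⟩ := hmem
  refine ⟨∑ i : s, coef i • (i : Y), fun Q => ?_⟩
  have h1 : (G : WeakDual ℝ Y →ₗ[ℝ] ℝ) Q = (∑ i : s, coef i • L (i : Y)) Q := by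
    rw [hcoef]
  have h2 : (∑ i : s, coef i • L (i : Y)) Q = ∑ i : s, coef i * Q (i : Y) := by
    simp [L, LinearMap.sum_apply]; rfl
  have h3 : Q (∑ i : s, coef i • (i : Y)) = ∑ i : s, coef i * Q (i : Y) := by
    rw [map_sum]
    exact Finset.sum_congr rfl fun i _ => by rw [map_smul]; rfl
  rw [h3, ← h2, ← h1]
  rfl

/-- The transform `F(f)(Q) = sup_{φ ∈ Y} (Q(φ) − f^×(φ))`, where
`f^×(φ) = sup_x (φ x − f x)`. -/
noncomputable def FTransform {X : Type*} [TopologicalSpace X]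
    {Y : Type*} [NormedAddCommGroup Y] [NormedSpace ℝ Y]
    (j : Y →ₗ[ℝ] (X →ᵇ ℝ)) (f : X → EReal) (Q : WeakDual ℝ Y) : EReal :=
  ⨆ φ : Y, ((Q φ : EReal) - ⨆ x : X, ((j φ x : EReal) - f x))

theorem FTransform_convex_lsc_extension
    {X : Type*} [TopologicalSpace X] [T2Space X] [NormalSpace X]
    (Y : Type*) [NormedAddCommGroup Y] [NormedSpace ℝ Y] [CompleteSpace Y]
    (j : Y →ₗ[ℝ] (X →ᵇ ℝ)) (hj : Function.Injective j)
    (hnorm : ∀ φ : Y, ‖j φ‖ ≤ ‖φ‖)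
    (hH : ∀ x : X, ∀ U : Set X, IsOpen U → x ∈ U →
      ∃ σ : Y, (∀ y, j σ y ∈ Set.Icc (0 : ℝ) 1) ∧ j σ x = 1 ∧ ∀ y ∉ U, j σ y = 0)
    (f : X → EReal) (hf : LowerSemicontinuous f)
    (hbdd : ∃ m : ℝ, ∀ x, (m : EReal) ≤ f x) (hdom : ∃ x, f x ≠ ⊤) :
    -- convexity of F(f)
    (∀ Q₁ Q₂ : WeakDual ℝ Y, ∀ a b : ℝ, 0 ≤ a → 0 ≤ b → a + b = 1 →
      FTransform j f (a • Q₁ + b • Q₂) ≤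
        (a : EReal) * FTransform j f Q₁ + (b : EReal) * FTransform j f Q₂) ∧
    -- weak* lower semicontinuity of F(f)
    LowerSemicontinuous (FTransform j f) ∧
    -- the Dirac map, the domain inclusion, and the extension property
    ∃ Δ : X → WeakDual ℝ Y, (∀ (x : X) (φ : Y), Δ x φ = j φ x) ∧
      {Q : WeakDual ℝ Y | FTransform j f Q ≠ ⊤} ⊆
        closure (convexHull ℝ (Set.range Δ)) ∧
      ∀ x : X, FTransform j f (Δ x) = f x := by
  obtain ⟨m, hm⟩ := hbdd
  obtain ⟨x₀, hx₀⟩ := hdom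
  have hne : Nonempty X := ⟨x₀⟩
  have hfbot : ∀ x, f x ≠ ⊥ := fun x h => by
    have := hm x; rw [h, le_bot_iff] at this; exact EReal.coe_ne_bot m this
  -- the function g = f^× takes real values
  set g : Y → EReal := fun φ => ⨆ x : X, ((j φ x : EReal) - f x) with hgdef
  have hgub : ∀ φ : Y, g φ ≤ ((‖j φ‖ - m : ℝ) : EReal) := by
    intro φ
    refine iSup_le fun x => ?_
    rw [EReal.coe_sub]
    refine EReal.sub_le_sub (EReal.coe_le_coe_iff.2 ?_) (hm x)
    exact (le_abs_self _).trans (BoundedContinuousFunction.norm_coe_le_norm (j φ) x)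
  have hglb : ∀ φ : Y, ((j φ x₀ - (f x₀).toReal : ℝ) : EReal) ≤ g φ := by
    intro φ
    have h : ((j φ x₀ : EReal) - f x₀) = ((j φ x₀ - (f x₀).toReal : ℝ) : EReal) := by
      rw [EReal.coe_sub, EReal.coe_toReal hx₀ (hfbot x₀)]
    exact h ▸ le_iSup (fun x : X => ((j φ x : EReal) - f x)) x₀
  have hgtop : ∀ φ, g φ ≠ ⊤ :=
    fun φ h => (EReal.coe_lt_top _).not_ge (h ▸ hgub φ)
  have hgbot : ∀ φ, g φ ≠ ⊥ :=
    fun φ h => (EReal.bot_lt_coe _).not_ge (h ▸ hglb φ)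
  set c : Y → ℝ := fun φ => (g φ).toReal with hcdef
  have hc : ∀ φ, g φ = (c φ : EReal) :=
    fun φ => (EReal.coe_toReal (hgtop φ) (hgbot φ)).symm
  -- rewrite of the transform with real values
  have hF : ∀ Q : WeakDual ℝ Y,
      FTransform j f Q = ⨆ φ : Y, (((Q φ - c φ : ℝ)) : EReal) := by
    intro Q
    refine iSup_congr fun φ => ?_
    rw [show (⨆ x : X, ((j φ x : EReal) - f x)) = g φ from rfl, hc φ, ← EReal.coe_sub]
  -- the key upper bound: terms of g
  have hterm : ∀ φ x, ((j φ x : EReal) - f x) ≤ (c φ : EReal) :=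
    fun φ x => (hc φ) ▸ le_iSup (fun x : X => ((j φ x : EReal) - f x)) x
  have hcle : ∀ (φ : Y) (r : ℝ), (∀ x, ((j φ x : EReal) - f x) ≤ (r : EReal)) →
      c φ ≤ r := fun φ r h => EReal.coe_le_coe_iff.1 ((hc φ) ▸ iSup_le h)
  -- convexity
  have hconv : ∀ Q₁ Q₂ : WeakDual ℝ Y, ∀ a b : ℝ, 0 ≤ a → 0 ≤ b → a + b = 1 →
      FTransform j f (a • Q₁ + b • Q₂) ≤
        (a : EReal) * FTransform j f Q₁ + (b : EReal) * FTransform j f Q₂ := by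
    intro Q₁ Q₂ a b ha hb hab
    rw [hF]
    refine iSup_le fun φ => ?_
    have happ : (a • Q₁ + b • Q₂) φ = a * Q₁ φ + b * Q₂ φ := rfl
    have hsplit : ((a • Q₁ + b • Q₂) φ - c φ : ℝ)
        = a * (Q₁ φ - c φ) + b * (Q₂ φ - c φ) := by
      rw [happ]; linear_combination (c φ) * hab
    rw [hsplit, EReal.coe_add, EReal.coe_mul, EReal.coe_mul]
    refine add_le_add ?_ ?_
    · refine mul_le_mul_of_nonneg_left ?_ (EReal.coe_nonneg.2 ha)
      rw [hF Q₁]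
      exact le_iSup (fun φ : Y => (((Q₁ φ - c φ : ℝ)) : EReal)) φ
    · refine mul_le_mul_of_nonneg_left ?_ (EReal.coe_nonneg.2 hb)
      rw [hF Q₂]
      exact le_iSup (fun φ : Y => (((Q₂ φ - c φ : ℝ)) : EReal)) φ
  -- lower semicontinuity
  have hlsc : LowerSemicontinuous (FTransform j f) := by
    have heq : FTransform j f = fun Q => ⨆ φ : Y, (((Q φ - c φ : ℝ)) : EReal) :=
      funext hF
    rw [heq]
    refine lowerSemicontinuous_iSup fun φ => ?_
    exact (continuous_coe_real_ereal.comp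
      ((WeakDual.eval_continuous φ).sub continuous_const)).lowerSemicontinuous
  -- the Dirac map
  set Δ : X → WeakDual ℝ Y := fun x =>
    StrongDual.toWeakDual (LinearMap.mkContinuous
      (((BoundedContinuousFunction.evalCLM ℝ x : (X →ᵇ ℝ) →L[ℝ] ℝ) :
          (X →ᵇ ℝ) →ₗ[ℝ] ℝ).comp j) 1
      (fun φ => by
        simpa [one_mul] using
          (BoundedContinuousFunction.norm_coe_le_norm (j φ) x).trans (hnorm φ)))
    with hΔdef
  have hΔ : ∀ (x : X) (φ : Y), Δ x φ = j φ x := fun x φ => rfl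
  letI : LocallyConvexSpace ℝ (WeakDual ℝ Y) :=
    WeakBilin.locallyConvexSpace (B := topDualPairing ℝ Y)
  refine ⟨hconv, hlsc, Δ, hΔ, ?_, ?_⟩
  · -- domain inclusion
    intro Q hQ
    by_contra hQC
    obtain ⟨G, u, hGlt, hGu⟩ := geometric_hahn_banach_closed_point
      ((convex_convexHull ℝ _).closure) isClosed_closure hQC
    obtain ⟨φ, hφ⟩ := weakDual_exists_rep G
    have hφx : ∀ x : X, j φ x < u := by
      intro x
      have hmem : Δ x ∈ closure (convexHull ℝ (Set.range Δ)) :=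
        subset_closure (subset_convexHull ℝ _ ⟨x, rfl⟩)
      have := hGlt (Δ x) hmem
      rwa [hφ (Δ x), hΔ x φ] at this
    have hQφ : u < Q φ := by have := hGu; rwa [hφ Q] at this
    have hFbot : FTransform j f Q ≠ ⊥ := by
      rw [hF]
      intro h
      have h0 := le_iSup (fun φ : Y => (((Q φ - c φ : ℝ)) : EReal)) 0
      rw [h, le_bot_iff] at h0
      exact EReal.coe_ne_bot _ h0
    set ρ := (FTransform j f Q).toReal with hρdef
    have hρ : FTransform j f Q = (ρ : EReal) := (EReal.coe_toReal hQ hFbot).symm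
    have htpos : 0 < Q φ - u := sub_pos.2 hQφ
    set t : ℝ := (|ρ| + |m| + 1) / (Q φ - u) with htdef
    have ht0 : 0 ≤ t := div_nonneg (by positivity) htpos.le
    have hcb : c (t • φ) ≤ t * u - m := by
      refine hcle _ _ fun x => ?_
      have hjx : j (t • φ) x = t * j φ x := by rw [map_smul]; rfl
      rw [hjx, show ((t * u - m : ℝ) : EReal) = ((t * u : ℝ) : EReal) - (m : EReal)
        from EReal.coe_sub _ _]
      refine EReal.sub_le_sub (EReal.coe_le_coe_iff.2 ?_) (hm x)
      exact mul_le_mul_of_nonneg_left (hφx x).le ht0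
    have hterm2 : ((t * Q φ - c (t • φ) : ℝ) : EReal) ≤ FTransform j f Q := by
      rw [hF]
      have h0 := le_iSup (fun ψ : Y => (((Q ψ - c ψ : ℝ)) : EReal)) (t • φ)
      have hQs : Q (t • φ) = t * Q φ := by rw [map_smul]; rfl
      rwa [hQs] at h0
    rw [hρ, EReal.coe_le_coe_iff] at hterm2
    have hmul : t * (Q φ - u) = |ρ| + |m| + 1 := div_mul_cancel₀ _ htpos.ne'
    nlinarith [le_abs_self ρ, neg_abs_le m, abs_nonneg ρ]
  · -- extension property
    intro x
    refine le_antisymm ?_ ?_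
    · rw [hF]
      refine iSup_le fun φ => ?_
      rcases eq_or_ne (f x) ⊤ with h | h
      · exact h ▸ le_top
      · have h2 := hterm φ x
        rw [← EReal.coe_toReal h (hfbot x), ← EReal.coe_sub, EReal.coe_le_coe_iff] at h2
        rw [← EReal.coe_toReal h (hfbot x), EReal.coe_le_coe_iff, hΔ x φ]
        linarith
    · rw [← EReal.ge_of_forall_gt_iff_ge]
      intro r hr
      set U : Set X := {y | (r : EReal) < f y} with hUdef
      have hUopen : IsOpen U := hf.isOpen_preimage r
      have hxU : x ∈ U := hr
      obtain ⟨σ, hσ01, hσx, hσ0⟩ := hH x U hUopen hxU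
      set t : ℝ := max 0 (r - m) with htdef
      have ht0 : 0 ≤ t := le_max_left _ _
      have hcb : c (t • σ) ≤ max (t - r) (-m) := by
        refine hcle _ _ fun y => ?_
        have hjy : j (t • σ) y = t * j σ y := by rw [map_smul]; rfl
        by_cases hy : y ∈ U
        · have h1 : j (t • σ) y ≤ t := by
            rw [hjy]
            calc t * j σ y ≤ t * 1 := mul_le_mul_of_nonneg_left (hσ01 y).2 ht0
              _ = t := mul_one t
          calc ((j (t • σ) y : ℝ) : EReal) - f y
              ≤ (t : EReal) - (r : EReal) :=
                EReal.sub_le_sub (EReal.coe_le_coe_iff.2 h1) (le_of_lt hy)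
            _ = ((t - r : ℝ) : EReal) := (EReal.coe_sub _ _).symm
            _ ≤ ((max (t - r) (-m) : ℝ) : EReal) :=
                EReal.coe_le_coe_iff.2 (le_max_left _ _)
        · rw [hjy, hσ0 y hy, mul_zero]
          calc ((0 : ℝ) : EReal) - f y ≤ (0 : EReal) - (m : EReal) :=
                EReal.sub_le_sub le_rfl (hm y)
            _ = ((0 - m : ℝ) : EReal) := (EReal.coe_sub _ _).symm
            _ ≤ ((max (t - r) (-m) : ℝ) : EReal) :=
                EReal.coe_le_coe_iff.2 (by simpa using le_max_right (t - r) (-m))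
      have hr' : r ≤ t - c (t • σ) := by
        have htm : r ≤ t + m := by
          have h2 : r - m ≤ t := le_max_right _ _
          linarith
        rcases le_total (t - r) (-m) with hle | hle
        · rw [max_eq_right hle] at hcb; linarith
        · rw [max_eq_left hle] at hcb; linarith
      rw [hF]
      refine le_trans ?_ (le_iSup (fun ψ : Y => (((Δ x ψ - c ψ : ℝ)) : EReal)) (t • σ))
      have hΔts : Δ x (t • σ) = t := by
        rw [hΔ x (t • σ), map_smul]
        show (t • j σ) x = t
        rw [BoundedContinuousFunction.coe_smul]
        simp [hσx]
      rw [hΔts]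
      exact EReal.coe_le_coe_iff.2 hr'
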